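/- Let E be a Borel equivalence relation on a standard Borel space and let Γ and Δ be countably infinite groups. Then (E^ω)^{[Γ]} is Borel reducible to E^{[Γ×Δ]}. -/

import Mathlib

/-- The Γ-jump of an equivalence relation `E` on `X`. -/
def GammaJump (Γ : Type*) [Group Γ] {X : Type*} (E : X → X → Prop) :
    (Γ → X) → (Γ → X) → Prop :=
  fun x y => ∃ γ : Γ, ∀ α : Γ, E (x (γ⁻¹ * α)) (y α)

/-- Borel reducibility of binary relations on measurable spaces. -/
def BorelReducible {X Y : Type*} [MeasurableSpace X] [MeasurableSpace Y]
    (E : X → X → Prop) (F : Y → Y → Prop) : Prop :=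
  ∃ f : X → Y, Measurable f ∧ ∀ x x', E x x' ↔ F (f x) (f x')

section Aux

attribute [local instance] Classical.decEq

variable {Δ : Type*} [Group Δ] [Infinite Δ]

lemma exists_fresh (s : Finset Δ) (δ₀ : Δ) : ∃ a : Δ, a ∉ s ∧ δ₀ * a ∉ s := by
  obtain ⟨a, ha⟩ := Infinite.exists_notMem_finset (s ∪ s.image (fun b => δ₀⁻¹ * b))
  refine ⟨a, fun h => ha (Finset.mem_union_left _ h), fun h => ha ?_⟩
  exact Finset.mem_union_right _ (Finset.mem_image.mpr ⟨δ₀ * a, h, by group⟩)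

noncomputable def pts (g : ℕ → Δ) : ℕ → Δ := fun k =>
  Classical.choose (exists_fresh
    ((Finset.range k).attach.biUnion
      (fun i => {pts g i.1, g i.1 * pts g i.1})) (g k))
termination_by k => k
decreasing_by all_goals exact Finset.mem_range.mp i.2

/-- The set of points used before stage `k`. -/
noncomputable def prevs (g : ℕ → Δ) (k : ℕ) : Finset Δ :=
  (Finset.range k).attach.biUnion (fun i => {pts g i.1, g i.1 * pts g i.1})

lemma pts_eq (g : ℕ → Δ) (k : ℕ) :
    pts g k = Classical.choose (exists_fresh (prevs g k) (g k)) := by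
  rw [pts]
  rfl

lemma pts_fresh (g : ℕ → Δ) (k : ℕ) :
    pts g k ∉ prevs g k ∧ g k * pts g k ∉ prevs g k := by
  rw [pts_eq]
  exact Classical.choose_spec (exists_fresh (prevs g k) (g k))

lemma mem_prevs (g : ℕ → Δ) {i k : ℕ} (hik : i < k) :
    pts g i ∈ prevs g k ∧ g i * pts g i ∈ prevs g k := by
  constructor <;>
  · refine Finset.mem_biUnion.mpr ⟨⟨i, Finset.mem_range.mpr hik⟩, Finset.mem_attach _ _, ?_⟩
    simp

/-- The points chosen at different stages are all distinct. -/
lemma pts_uniq (g : ℕ → Δ) {k k' : ℕ} {δ : Δ}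
    (h : δ = pts g k ∨ δ = g k * pts g k)
    (h' : δ = pts g k' ∨ δ = g k' * pts g k') : k = k' := by
  rcases lt_trichotomy k k' with hlt | heq | hgt
  · exfalso
    have hm := mem_prevs g hlt
    have hf := pts_fresh g k'
    rcases h' with h' | h' <;> rcases h with h | h <;>
      simp_all
  · exact heq
  · exfalso
    have hm := mem_prevs g hgt
    have hf := pts_fresh g k
    rcases h' with h' | h' <;> rcases h with h | h <;>
      simp_all

open Classical in
/-- The coding function `Δ → ℕ`. -/
noncomputable def code (g : ℕ → Δ) (h : ℕ → ℕ) : Δ → ℕ := fun δ =>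
  if H : ∃ k, δ = pts g k ∨ δ = g k * pts g k then h H.choose else 0

lemma code_eq (g : ℕ → Δ) (h : ℕ → ℕ) {k : ℕ} {δ : Δ}
    (hδ : δ = pts g k ∨ δ = g k * pts g k) : code g h δ = h k := by
  have H : ∃ k, δ = pts g k ∨ δ = g k * pts g k := ⟨k, hδ⟩
  have := pts_uniq g H.choose_spec hδ
  simp only [code, dif_pos H, this]

/-- Key property: for every `δ₀` and `n` there is `δ` with `code δ = n` and
`code (δ₀⁻¹ * δ) = n`. -/
lemma code_key [Countable Δ] :
    ∃ c : Δ → ℕ, ∀ δ₀ : Δ, ∀ n : ℕ, ∃ δ : Δ, c δ = n ∧ c (δ₀⁻¹ * δ) = n := by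
  obtain ⟨e, he⟩ := exists_surjective_nat (Δ × ℕ)
  refine ⟨code (fun k => (e k).1) (fun k => (e k).2), fun δ₀ n => ?_⟩
  obtain ⟨k, hk⟩ := he (δ₀, n)
  refine ⟨(e k).1 * pts (fun k => (e k).1) k, ?_, ?_⟩
  · rw [code_eq _ _ (Or.inr rfl), hk]
  · have : δ₀⁻¹ * ((e k).1 * pts (fun k => (e k).1) k) = pts (fun k => (e k).1) k := by
      rw [hk]; group
    rw [this, code_eq _ _ (Or.inl rfl), hk]

end Aux

/-- For a Borel equivalence relation `E` on a standard Borel space and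
countably infinite groups `Γ` and `Δ`, `(E^ω)^{[Γ]}` is Borel reducible to `E^{[Γ×Δ]}`. -/
theorem omegaPower_gammaJump_borelReducible_prodJump
    {X : Type*} [MeasurableSpace X] [StandardBorelSpace X]
    (E : X → X → Prop) (hE : Equivalence E)
    (hEBorel : MeasurableSet {p : X × X | E p.1 p.2})
    (Γ Δ : Type*) [Group Γ] [Countable Γ] [Infinite Γ]
    [Group Δ] [Countable Δ] [Infinite Δ] :
    BorelReducible (GammaJump Γ (fun x y : ℕ → X => ∀ n, E (x n) (y n)))
      (GammaJump (Γ × Δ) E) := by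
  obtain ⟨c, hc⟩ := code_key (Δ := Δ)
  refine ⟨fun x p => x p.1 (c p.2), ?_, ?_⟩
  · exact measurable_pi_lambda _ fun p =>
      (measurable_pi_apply (c p.2)).comp (measurable_pi_apply p.1)
  · intro x y
    constructor
    · rintro ⟨γ₀, hγ⟩
      exact ⟨(γ₀, 1), fun p => by simpa using hγ p.1 (c p.2)⟩
    · rintro ⟨⟨γ₀, δ₀⟩, h⟩
      refine ⟨γ₀, fun γ n => ?_⟩
      obtain ⟨δ, hδ1, hδ2⟩ := hc δ₀ n
      have := h (γ, δ)
      simp only [Prod.inv_mk, Prod.mk_mul_mk] at this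
      rwa [hδ1, hδ2] at this
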